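/- Let R = k[[x,y]] be the power series ring over a field k. The subring R[x/y^n : n ∈ ℤ_{>0}] of the quotient field of R, generated over R by all elements x/y^n for positive integers n, is not a Noetherian ring. -/

import Mathlib

open MvPowerSeries

section Aux

variable (k : Type*) [Field k]

/-- Core coefficient computation: `Y^M = r·Y^(M+1) + X·g` is impossible in `k[[X,Y]]`. -/
private lemma key_coeff (M : ℕ) (r g : MvPowerSeries (Fin 2) k)
    (h : (MvPowerSeries.X (1 : Fin 2) : MvPowerSeries (Fin 2) k) ^ M
        = r * MvPowerSeries.X 1 ^ (M + 1) + MvPowerSeries.X 0 * g) : False := by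
  have h1 := congrArg (MvPowerSeries.coeff (Finsupp.single (1 : Fin 2) M)) h
  rw [map_add, MvPowerSeries.coeff_X_pow, if_pos rfl] at h1
  rw [MvPowerSeries.X_pow_eq, MvPowerSeries.coeff_mul_monomial, if_neg (by
    rw [Finsupp.single_le_iff, Finsupp.single_eq_same]; omega)] at h1
  rw [show (MvPowerSeries.X (0 : Fin 2) : MvPowerSeries (Fin 2) k)
      = MvPowerSeries.monomial (Finsupp.single (0 : Fin 2) 1) 1 from rfl,
    MvPowerSeries.coeff_monomial_mul, if_neg (by
      rw [Finsupp.single_le_iff, Finsupp.single_eq_of_ne' (by decide : (1 : Fin 2) ≠ 0)]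
      omega)] at h1
  simp at h1

private lemma X1_ne_zero :
    (MvPowerSeries.X (1 : Fin 2) : MvPowerSeries (Fin 2) k) ≠ 0 := by
  intro h
  have := congrArg (MvPowerSeries.coeff (Finsupp.single (1 : Fin 2) 1)) h
  simp [MvPowerSeries.coeff_X] at this

private lemma X0_ne_zero :
    (MvPowerSeries.X (0 : Fin 2) : MvPowerSeries (Fin 2) k) ≠ 0 := by
  intro h
  have := congrArg (MvPowerSeries.coeff (Finsupp.single (0 : Fin 2) 1)) h
  simp [MvPowerSeries.coeff_X] at this

/-- Structure lemma: every element of the adjoined algebra can be written as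
`(r·Y^M + X·g)/Y^M`. -/
private lemma adjoin_structure
    (z : FractionRing (MvPowerSeries (Fin 2) k))
    (hz : z ∈ Algebra.adjoin (MvPowerSeries (Fin 2) k)
      {w : FractionRing (MvPowerSeries (Fin 2) k) | ∃ n : ℕ, 0 < n ∧
        w = algebraMap (MvPowerSeries (Fin 2) k) _ (MvPowerSeries.X (0 : Fin 2)) /
            algebraMap (MvPowerSeries (Fin 2) k) _ (MvPowerSeries.X (1 : Fin 2)) ^ n}) :
    ∃ (M : ℕ) (r g : MvPowerSeries (Fin 2) k),
      z * (algebraMap (MvPowerSeries (Fin 2) k) _ (MvPowerSeries.X (1 : Fin 2))) ^ M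
        = algebraMap (MvPowerSeries (Fin 2) k) _
            (r * MvPowerSeries.X 1 ^ M + MvPowerSeries.X 0 * g) := by
  set R := MvPowerSeries (Fin 2) k
  set K := FractionRing R
  set φ := algebraMap R K with hφ
  have hy : φ (MvPowerSeries.X 1) ≠ 0 :=
    (map_ne_zero_iff φ (IsFractionRing.injective R K)).mpr (X1_ne_zero k)
  induction hz using Algebra.adjoin_induction with
  | mem w hw =>
    obtain ⟨n, hn, rfl⟩ := hw
    refine ⟨n, 0, 1, ?_⟩
    rw [div_mul_cancel₀ _ (pow_ne_zero n hy)]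
    simp
  | algebraMap r => exact ⟨0, r, 0, by simp; rfl⟩
  | add z1 z2 _ _ ih1 ih2 =>
    obtain ⟨M1, r1, g1, h1⟩ := ih1
    obtain ⟨M2, r2, g2, h2⟩ := ih2
    refine ⟨M1 + M2, r1 + r2,
      g1 * MvPowerSeries.X 1 ^ M2 + g2 * MvPowerSeries.X 1 ^ M1, ?_⟩
    have e : (z1 + z2) * φ (MvPowerSeries.X 1) ^ (M1 + M2)
        = (z1 * φ (MvPowerSeries.X 1) ^ M1) * φ (MvPowerSeries.X 1) ^ M2
          + (z2 * φ (MvPowerSeries.X 1) ^ M2) * φ (MvPowerSeries.X 1) ^ M1 := by ring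
    rw [e, h1, h2, ← map_pow, ← map_pow, ← map_mul, ← map_mul, ← map_add]
    exact congrArg φ (by ring)
  | mul z1 z2 _ _ ih1 ih2 =>
    obtain ⟨M1, r1, g1, h1⟩ := ih1
    obtain ⟨M2, r2, g2, h2⟩ := ih2
    refine ⟨M1 + M2, r1 * r2,
      r1 * MvPowerSeries.X 1 ^ M1 * g2 + r2 * MvPowerSeries.X 1 ^ M2 * g1
        + MvPowerSeries.X 0 * (g1 * g2), ?_⟩
    have e : (z1 * z2) * φ (MvPowerSeries.X 1) ^ (M1 + M2)
        = (z1 * φ (MvPowerSeries.X 1) ^ M1) * (z2 * φ (MvPowerSeries.X 1) ^ M2) := by ring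
    rw [e, h1, h2, ← map_mul]
    exact congrArg φ (by ring)

end Aux

set_option maxHeartbeats 1000000 in
set_option synthInstance.maxHeartbeats 400000 in
/-- Let `R = k[[x,y]]` be the power series ring in two variables over a field
`k`, with quotient field `K`. The `R`-subalgebra `R[x/y^n : n ∈ ℤ_{>0}]` of `K` generated by all
elements `x/y^n` for positive integers `n` is not Noetherian. -/
theorem adjoin_x_div_y_pow_not_noetherian (k : Type*) [Field k] :
    letI R := MvPowerSeries (Fin 2) k
    letI K := FractionRing R
    letI x : K := algebraMap R K (MvPowerSeries.X (0 : Fin 2))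
    letI y : K := algebraMap R K (MvPowerSeries.X (1 : Fin 2))
    ¬ IsNoetherianRing
      (Algebra.adjoin R {z : K | ∃ n : ℕ, 0 < n ∧ z = x / y ^ n}) := by
  intro hN
  set R := MvPowerSeries (Fin 2) k
  set K := FractionRing R
  set φ := algebraMap R K with hφ
  set x : K := φ (MvPowerSeries.X (0 : Fin 2)) with hxdef
  set y : K := φ (MvPowerSeries.X (1 : Fin 2)) with hydef
  set S : Set K := {z : K | ∃ n : ℕ, 0 < n ∧ z = x / y ^ n} with hS
  set A := Algebra.adjoin R S with hA
  have hinj : Function.Injective φ := IsFractionRing.injective R K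
  have hx : x ≠ 0 := (map_ne_zero_iff φ hinj).mpr (X0_ne_zero k)
  have hy : y ≠ 0 := (map_ne_zero_iff φ hinj).mpr (X1_ne_zero k)
  -- the generators, as elements of A
  have hmem : ∀ n : ℕ, x / y ^ (n + 1) ∈ A :=
    fun n => Algebra.subset_adjoin ⟨n + 1, n.succ_pos, rfl⟩
  set e : ℕ → A := fun n => ⟨x / y ^ (n + 1), hmem n⟩ with he
  have yA_mem : y ∈ A := A.algebraMap_mem (MvPowerSeries.X 1)
  set yA : A := ⟨y, yA_mem⟩ with hyA
  -- the ascending chain of ideals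
  have Jmono : Monotone (fun n => Ideal.span (e '' Set.Iic n) : ℕ → Ideal A) :=
    fun a b hab => Ideal.span_mono (Set.image_mono (Set.Iic_subset_Iic.mpr hab))
  obtain ⟨n, hn⟩ := monotone_stabilizes_iff_noetherian.mpr
    (isNoetherianRing_iff.mp hN) ⟨fun n => Ideal.span (e '' Set.Iic n), Jmono⟩
  have hstab := hn (n + 1) (Nat.le_succ n)
  -- e (n+1) belongs to J n
  have hmem1 : e (n + 1) ∈ Ideal.span (e '' Set.Iic n) := by
    have h1 : e (n + 1) ∈ Ideal.span (e '' Set.Iic (n + 1)) :=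
      Ideal.subset_span ⟨n + 1, Set.self_mem_Iic, rfl⟩
    have hstab' : Ideal.span (e '' Set.Iic n) = Ideal.span (e '' Set.Iic (n + 1)) := hstab
    rw [hstab']
    exact h1
  -- J n ⊆ (e n)
  have hJle : Ideal.span (e '' Set.Iic n) ≤ Ideal.span {e n} := by
    rw [Ideal.span_le]
    rintro _ ⟨i, hi, rfl⟩
    refine Ideal.mem_span_singleton.mpr ⟨yA ^ (n - i), ?_⟩
    apply Subtype.ext
    push_cast
    have hi' : i ≤ n := hi
    have hexp : n - i + (i + 1) = n + 1 := by omega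
    rw [div_mul_eq_mul_div, div_eq_div_iff (pow_ne_zero _ hy) (pow_ne_zero _ hy),
      mul_assoc, ← pow_add, hexp]
  have hmem2 := hJle hmem1
  obtain ⟨c, hc⟩ := Ideal.mem_span_singleton.mp hmem2
  -- extract c = 1/y
  have hcK : x / y ^ (n + 2) = x / y ^ (n + 1) * (c : K) := by
    have := congrArg (Subtype.val) hc
    push_cast at this
    exact this
  have hc1y : (c : K) = 1 / y := by
    have h2 : x / y ^ (n + 2) = x / y ^ (n + 1) * (1 / y) := by
      rw [div_mul_div_comm, mul_one, ← pow_succ]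
    exact mul_left_cancel₀ (div_ne_zero hx (pow_ne_zero _ hy)) (hcK.symm.trans h2)
  -- structure lemma for c
  obtain ⟨M, r, g, hstr⟩ := adjoin_structure k (c : K) c.2
  have hcy : (c : K) * y = 1 := by rw [hc1y, one_div, inv_mul_cancel₀ hy]
  have hkey : φ (MvPowerSeries.X 1 ^ M)
      = φ ((r * MvPowerSeries.X 1 ^ M + MvPowerSeries.X 0 * g) * MvPowerSeries.X 1) := by
    rw [map_mul, ← hstr, map_pow]
    rw [show (c : K) * y ^ M * y = ((c : K) * y) * y ^ M by ring, hcy, one_mul]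
  have hkey2 : (MvPowerSeries.X (1 : Fin 2) : R) ^ M
      = r * MvPowerSeries.X 1 ^ (M + 1) + MvPowerSeries.X 0 * (g * MvPowerSeries.X 1) :=
    hinj hkey |>.trans (by ring)
  exact key_coeff k M r (g * MvPowerSeries.X 1) hkey2
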